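/- Let q ≥ 5 be a prime power, 𝔽_q the field with q elements, and t a generator of 𝔽_qˣ. In GL(2,𝔽_q) let I be the identity matrix, B₁ = [[1,0],[-1,-1]], B₃ = [[1,0],[t-1,t]], C = [[0,1],[-1,-1]]. Define the subgroups: G₁ = ⟨tI, C, B₁⟩; G₂ = the subgroup of all invertible lower-triangular matrices; G₃ = ⟨tI, C·B₁, B₃⟩; G₄ = the subgroup of all invertible diagonal and anti-diagonal matrices. Then |G₁|·|G₂|·|G₃₄|·|G₁₂₃|·|G₁₂₄| = 6q(q-1)⁶ and |G₁₂|·|G₁₃|·|G₁₄|·|G₂₃|·|G₂₄| = 8(q-1)⁷; since q ≥ 5, the tuple (G₁,G₂,G₃,G₄) violates the Ingleton inequality |G₁|·|G₂|·|G₃₄|·|G₁₂₃|·|G₁₂₄| ≥ |G₁₂|·|G₁₃|·|G₁₄|·|G₂₃|·|G₂₄|. -/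

import Mathlib

namespace Stmt10

variable {α : Type*}

@[simp] lemma v6_0 (a b c d e f : α) : ![a,b,c,d,e,f] 0 = a := rfl
@[simp] lemma v6_1 (a b c d e f : α) : ![a,b,c,d,e,f] 1 = b := rfl
@[simp] lemma v6_2 (a b c d e f : α) : ![a,b,c,d,e,f] 2 = c := rfl
@[simp] lemma v6_3 (a b c d e f : α) : ![a,b,c,d,e,f] 3 = d := rfl
@[simp] lemma v6_4 (a b c d e f : α) : ![a,b,c,d,e,f] 4 = e := rfl
@[simp] lemma v6_5 (a b c d e f : α) : ![a,b,c,d,e,f] 5 = f := rfl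
@[simp] lemma v6_0' (a b c d e f : α) (h : (0:ℕ) < 6) : ![a,b,c,d,e,f] ⟨0,h⟩ = a := rfl
@[simp] lemma v6_1' (a b c d e f : α) (h : (1:ℕ) < 6) : ![a,b,c,d,e,f] ⟨1,h⟩ = b := rfl
@[simp] lemma v6_2' (a b c d e f : α) (h : (2:ℕ) < 6) : ![a,b,c,d,e,f] ⟨2,h⟩ = c := rfl
@[simp] lemma v6_3' (a b c d e f : α) (h : (3:ℕ) < 6) : ![a,b,c,d,e,f] ⟨3,h⟩ = d := rfl
@[simp] lemma v6_4' (a b c d e f : α) (h : (4:ℕ) < 6) : ![a,b,c,d,e,f] ⟨4,h⟩ = e := rfl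
@[simp] lemma v6_5' (a b c d e f : α) (h : (5:ℕ) < 6) : ![a,b,c,d,e,f] ⟨5,h⟩ = f := rfl

variable {F : Type*} [Field F]

/-- The six matrices of the `S₃`-copy in `GL(2,F)`. -/
def L : Fin 6 → Matrix (Fin 2) (Fin 2) F :=
  ![!![1,0;0,1], !![0,1;-1,-1], !![-1,-1;1,0], !![1,0;-1,-1], !![-1,-1;0,1], !![0,1;1,0]]

lemma L_zero : (L 0 : Matrix (Fin 2) (Fin 2) F) = 1 := by
  simp [L, Matrix.one_fin_two]

def tbl : Fin 6 → Fin 6 → Fin 6 :=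
  ![![0,1,2,3,4,5], ![1,2,0,4,5,3], ![2,0,1,5,3,4],
    ![3,5,4,0,2,1], ![4,3,5,1,0,2], ![5,4,3,2,1,0]]

lemma L_mul (i j : Fin 6) : (L i : Matrix (Fin 2) (Fin 2) F) * L j = L (tbl i j) := by
  fin_cases i <;> fin_cases j <;>
    · ext a b
      fin_cases a <;> fin_cases b <;>
        norm_num [L, tbl, Matrix.mul_apply, Fin.sum_univ_two]

def itbl : Fin 6 → Fin 6 := ![0,2,1,3,4,5]

lemma L_mul_itbl (i : Fin 6) : (L i : Matrix (Fin 2) (Fin 2) F) * L (itbl i) = 1 := by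
  have h := L_mul (F := F) i (itbl i)
  fin_cases i <;> · rw [← L_zero]; simpa [itbl, tbl] using h

noncomputable def sc : Fˣ →* GL (Fin 2) F := Units.map (Matrix.scalar (Fin 2)).toMonoidHom

lemma sc_val (a : Fˣ) : ((sc a : GL (Fin 2) F) : Matrix (Fin 2) (Fin 2) F) = (a:F) • 1 := by
  simp [sc, Matrix.scalar, Matrix.smul_one_eq_diagonal]

lemma det_ne (M : GL (Fin 2) F) : ((M : Matrix (Fin 2) (Fin 2) F)).det ≠ 0 := by
  have h : (M : Matrix (Fin 2) (Fin 2) F) * ((M⁻¹ : GL (Fin 2) F) : Matrix (Fin 2) (Fin 2) F) = 1 := by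
    rw [← Units.val_mul, mul_inv_cancel, Units.val_one]
  intro h0
  have := congrArg Matrix.det h
  rw [Matrix.det_mul, h0, zero_mul, Matrix.det_one] at this
  exact zero_ne_one this

set_option maxHeartbeats 1000000 in
lemma L_smul_inj {a b : F} {i j : Fin 6} (ha : a ≠ 0)
    (h : a • (L i : Matrix (Fin 2) (Fin 2) F) = b • L j) : a = b ∧ i = j := by
  fin_cases i <;> fin_cases j <;>
  · simp only [L, v6_0, v6_1, v6_2, v6_3, v6_4, v6_5, v6_0', v6_1', v6_2', v6_3', v6_4', v6_5'] at h
    have e00 := congrFun (congrFun h 0) 0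
    have e01 := congrFun (congrFun h 0) 1
    have e10 := congrFun (congrFun h 1) 0
    have e11 := congrFun (congrFun h 1) 1
    simp only [Matrix.smul_apply, Matrix.of_apply, Matrix.cons_val', Matrix.cons_val_zero, Matrix.cons_val_one,
      Matrix.head_cons, Matrix.head_fin_const, Matrix.empty_val', Matrix.cons_val_fin_one,
      smul_eq_mul, mul_one, mul_zero, mul_neg] at e00 e01 e10 e11
    first
    | exact ⟨e00, rfl⟩ | exact ⟨e01, rfl⟩ | exact ⟨neg_inj.mp e00, rfl⟩ | exact ⟨neg_inj.mp e01, rfl⟩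
    | exact absurd (show a = 0 by first
        | linear_combination e00 | linear_combination -e00 | linear_combination e01
        | linear_combination -e01 | linear_combination e10 | linear_combination -e10
        | linear_combination e11 | linear_combination -e11
        | linear_combination e00 + e10 | linear_combination e01 + e11
        | linear_combination e00 + e01 | linear_combination e10 + e11
        | linear_combination e00 + e11 | linear_combination e01 + e10) ha


lemma smul_L_mul {a b : F} (i j : Fin 6) :
    ((a : F) • L i) * ((b : F) • L j) = ((a * b) • L (tbl i j) : Matrix (Fin 2) (Fin 2) F) := by
  rw [smul_mul_smul_comm, L_mul]

lemma val_inv (M : GL (Fin 2) F) :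
    ((M⁻¹ : GL (Fin 2) F) : Matrix (Fin 2) (Fin 2) F) = (M : Matrix (Fin 2) (Fin 2) F)⁻¹ := by
  simp

/-- The subgroup of scalar multiples of the six matrices. -/
noncomputable def S1 : Subgroup (GL (Fin 2) F) where
  carrier := {M | ∃ a : Fˣ, ∃ i : Fin 6, (M : Matrix (Fin 2) (Fin 2) F) = (a:F) • L i}
  one_mem' := ⟨1, 0, by simp [L_zero]⟩
  mul_mem' := by
    rintro M N ⟨a, i, hM⟩ ⟨b, j, hN⟩
    exact ⟨a * b, tbl i j, by rw [Units.val_mul, hM, hN, smul_L_mul, Units.val_mul]⟩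
  inv_mem' := by
    rintro M ⟨a, i, hM⟩
    refine ⟨a⁻¹, itbl i, ?_⟩
    have h1 : (M : Matrix (Fin 2) (Fin 2) F) * (((a⁻¹ : Fˣ) : F) • L (itbl i)) = 1 := by
      rw [hM, smul_mul_smul_comm, L_mul_itbl, Units.mul_inv, one_smul]
    rw [val_inv, Matrix.inv_eq_right_inv h1]

lemma mem_S1_iff (M : GL (Fin 2) F) :
    M ∈ (S1 : Subgroup (GL (Fin 2) F)) ↔
      ∃ a : Fˣ, ∃ i : Fin 6, (M : Matrix (Fin 2) (Fin 2) F) = (a:F) • L i := Iff.rfl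

end Stmt10

section G1

open Stmt10

variable {F : Type*} [Field F] [Fintype F]
variable (t : Fˣ) (ht : ∀ x : Fˣ, x ∈ Subgroup.zpowers t)

include ht in
lemma exp_exists (a : Fˣ) : ∃ k : ℕ, t ^ k = a := by
  have := ((isOfFinOrder_of_finite t).mem_powers_iff_mem_zpowers).2 (ht a)
  obtain ⟨k, hk⟩ := this
  exact ⟨k, hk⟩

variable (T C B₁ B₃ : GL (Fin 2) F)
variable (hT : (T : Matrix (Fin 2) (Fin 2) F) = !![(t : F), 0; 0, (t : F)])
variable (hC : (C : Matrix (Fin 2) (Fin 2) F) = !![0, 1; -1, -1])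
variable (hB₁ : (B₁ : Matrix (Fin 2) (Fin 2) F) = !![1, 0; -1, -1])

/-- The six group elements. -/
noncomputable def gg : Fin 6 → GL (Fin 2) F := ![1, C, C*C, B₁, C*B₁, C*C*B₁]

include hC hB₁ in
lemma gg_val (i : Fin 6) : ((gg C B₁ i : GL (Fin 2) F) : Matrix (Fin 2) (Fin 2) F) = L i := by
  fin_cases i <;>
  · simp only [gg, v6_0, v6_1, v6_2, v6_3, v6_4, v6_5, Units.val_mul, Units.val_one, hC, hB₁]
    ext a b
    fin_cases a <;> fin_cases b <;>
      norm_num [L, hC, hB₁, Matrix.mul_apply, Fin.sum_univ_two, Matrix.one_apply]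

include hT in
lemma T_eq_sc : T = sc t := by
  apply Units.ext
  rw [hT, sc_val]
  ext a b
  fin_cases a <;> fin_cases b <;> simp [Matrix.one_apply]

include ht hT in
lemma sc_mem_closure (S : Set (GL (Fin 2) F)) (hTS : T ∈ S) (a : Fˣ) :
    sc a ∈ Subgroup.closure S := by
  obtain ⟨k, hk⟩ := exp_exists t ht a
  have : sc a = T ^ k := by
    rw [T_eq_sc t T hT, ← map_pow, hk]
  rw [this]
  exact pow_mem (Subgroup.subset_closure hTS) k

include ht hT hC hB₁ in
lemma mem_G1_iff (M : GL (Fin 2) F) :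
    M ∈ Subgroup.closure {T, C, B₁} ↔
      ∃ a : Fˣ, ∃ i : Fin 6, (M : Matrix (Fin 2) (Fin 2) F) = (a:F) • L i := by
  constructor
  · intro hM
    refine Subgroup.closure_le (K := S1) |>.2 ?_ hM
    rintro x (rfl | rfl | rfl)
    · refine ⟨t, 0, ?_⟩
      rw [hT, L_zero]
      ext a b
      fin_cases a <;> fin_cases b <;> simp [Matrix.one_apply]
    · exact ⟨1, 1, by rw [hC]; norm_num [L]⟩
    · exact ⟨1, 3, by rw [hB₁]; norm_num [L]⟩
  · rintro ⟨a, i, hM⟩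
    have hgg : gg C B₁ i ∈ Subgroup.closure ({T, C, B₁} : Set (GL (Fin 2) F)) := by
      have hCm : C ∈ Subgroup.closure ({T, C, B₁} : Set (GL (Fin 2) F)) :=
        Subgroup.subset_closure (by simp)
      have hBm : B₁ ∈ Subgroup.closure ({T, C, B₁} : Set (GL (Fin 2) F)) :=
        Subgroup.subset_closure (by simp)
      fin_cases i <;>
        simp only [gg, v6_0, v6_1, v6_2, v6_3, v6_4, v6_5] <;>
        first
          | exact one_mem _
          | exact hCm
          | exact mul_mem hCm hCm
          | exact hBm
          | exact mul_mem hCm hBm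
          | exact mul_mem (mul_mem hCm hCm) hBm
    have hMeq : M = sc a * gg C B₁ i := by
      apply Units.ext
      rw [Units.val_mul, sc_val, gg_val C B₁ hC hB₁, hM, smul_mul_assoc, one_mul]
    rw [hMeq]
    exact mul_mem (sc_mem_closure t ht T hT _ (by simp) a) hgg

end G1

section G3

open Stmt10

variable {F : Type*} [Field F] [Fintype F]
variable (t : Fˣ) (ht : ∀ x : Fˣ, x ∈ Subgroup.zpowers t)
variable (T C B₁ B₃ : GL (Fin 2) F)
variable (hT : (T : Matrix (Fin 2) (Fin 2) F) = !![(t : F), 0; 0, (t : F)])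
variable (hC : (C : Matrix (Fin 2) (Fin 2) F) = !![0, 1; -1, -1])
variable (hB₁ : (B₁ : Matrix (Fin 2) (Fin 2) F) = !![1, 0; -1, -1])
variable (hB₃ : (B₃ : Matrix (Fin 2) (Fin 2) F) = !![1, 0; (t : F) - 1, (t : F)])

/-- The subgroup that `G₃` will turn out to be. -/
noncomputable def S3 : Subgroup (GL (Fin 2) F) where
  carrier := {M | ((M : Matrix (Fin 2) (Fin 2) F) 0 1 = 0 ∧
      (M : Matrix (Fin 2) (Fin 2) F) 1 0 =
        (M : Matrix (Fin 2) (Fin 2) F) 1 1 - (M : Matrix (Fin 2) (Fin 2) F) 0 0) ∨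
    ((M : Matrix (Fin 2) (Fin 2) F) 0 0 = (M : Matrix (Fin 2) (Fin 2) F) 0 1 ∧
      (M : Matrix (Fin 2) (Fin 2) F) 1 1 = -(M : Matrix (Fin 2) (Fin 2) F) 0 1)}
  one_mem' := Or.inl (by simp)
  mul_mem' := by
    rintro M N (⟨h1, h2⟩ | ⟨h1, h2⟩) (⟨g1, g2⟩ | ⟨g1, g2⟩)
    · refine Or.inl ⟨?_, ?_⟩ <;>
      · simp only [Units.val_mul, Matrix.mul_apply, Fin.sum_univ_two]
        simp only [h1, h2, g1, g2]; ring
    · refine Or.inr ⟨?_, ?_⟩ <;>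
      · simp only [Units.val_mul, Matrix.mul_apply, Fin.sum_univ_two]
        simp only [h1, h2, g1, g2]; ring
    · refine Or.inr ⟨?_, ?_⟩ <;>
      · simp only [Units.val_mul, Matrix.mul_apply, Fin.sum_univ_two]
        simp only [h1, h2, g1, g2]; ring
    · refine Or.inl ⟨?_, ?_⟩ <;>
      · simp only [Units.val_mul, Matrix.mul_apply, Fin.sum_univ_two]
        simp only [h1, h2, g1, g2]; ring
  inv_mem' := by
    rintro M (⟨h1, h2⟩ | ⟨h1, h2⟩)
    · set x := (M : Matrix (Fin 2) (Fin 2) F) 0 0 with hx0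
      set y := (M : Matrix (Fin 2) (Fin 2) F) 1 1 with hy0
      have hdet : (M : Matrix (Fin 2) (Fin 2) F).det = x * y := by
        rw [Matrix.det_fin_two, h1]; ring
      have hxy : x * y ≠ 0 := hdet ▸ det_ne M
      have hx : x ≠ 0 := fun h => hxy (by rw [h, zero_mul])
      have hy : y ≠ 0 := fun h => hxy (by rw [h, mul_zero])
      have hM : (M : Matrix (Fin 2) (Fin 2) F) = !![x, 0; y - x, y] := by
        conv_lhs => rw [Matrix.eta_fin_two (M : Matrix (Fin 2) (Fin 2) F)]
        rw [h1, h2]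
      have hinv : (M : Matrix (Fin 2) (Fin 2) F) * !![x⁻¹, 0; y⁻¹ - x⁻¹, y⁻¹] = 1 := by
        rw [hM]
        ext a b
        fin_cases a <;> fin_cases b <;>
          simp [Matrix.mul_apply, Fin.sum_univ_two, Matrix.one_apply] <;>
          field_simp <;> ring
      have : ((M⁻¹ : GL (Fin 2) F) : Matrix (Fin 2) (Fin 2) F) = !![x⁻¹, 0; y⁻¹ - x⁻¹, y⁻¹] := by
        rw [val_inv, Matrix.inv_eq_right_inv hinv]
      refine Or.inl ?_
      rw [this]
      constructor <;> simp
    · set b := (M : Matrix (Fin 2) (Fin 2) F) 0 0 with hb0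
      set c := (M : Matrix (Fin 2) (Fin 2) F) 1 0 with hc0
      have hdet : (M : Matrix (Fin 2) (Fin 2) F).det = -(b * b + b * c) := by
        rw [Matrix.det_fin_two, ← h1, h2, ← h1]; ring
      have hs : b * b + b * c ≠ 0 := fun h => det_ne M (by rw [hdet, h, neg_zero])
      have hM : (M : Matrix (Fin 2) (Fin 2) F) = !![b, b; c, -b] := by
        conv_lhs => rw [Matrix.eta_fin_two (M : Matrix (Fin 2) (Fin 2) F)]
        rw [← h1, h2, ← h1]
      have hinv : (M : Matrix (Fin 2) (Fin 2) F) *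
          ((b * b + b * c)⁻¹ • !![b, b; c, -b]) = 1 := by
        have hs' : b * c + b ^ 2 ≠ 0 := by rw [add_comm, sq]; exact hs
        rw [hM]
        ext i j
        fin_cases i <;> fin_cases j <;>
          simp [Matrix.mul_apply, Fin.sum_univ_two, Matrix.one_apply] <;>
          field_simp <;> ring <;> rw [← add_mul, mul_inv_cancel₀ hs']
      have hval : ((M⁻¹ : GL (Fin 2) F) : Matrix (Fin 2) (Fin 2) F) =
          (b * b + b * c)⁻¹ • !![b, b; c, -b] := by
        rw [val_inv, Matrix.inv_eq_right_inv hinv]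
      refine Or.inr ?_
      rw [hval]
      constructor <;> simp <;> ring

include hB₃ in
lemma B3_pow (k : ℕ) : ((B₃ ^ k : GL (Fin 2) F) : Matrix (Fin 2) (Fin 2) F) =
    !![1, 0; (t : F) ^ k - 1, (t : F) ^ k] := by
  induction k with
  | zero =>
      ext a b
      fin_cases a <;> fin_cases b <;> simp [Matrix.one_apply]
  | succ k ih =>
      rw [pow_succ, Units.val_mul, ih, hB₃]
      ext a b
      fin_cases a <;> fin_cases b <;>
        simp [Matrix.mul_apply, Fin.sum_univ_two] <;> ring

include ht hT hB₃ in
lemma mem_G3_of_type1 (M : GL (Fin 2) F)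
    (h1 : (M : Matrix (Fin 2) (Fin 2) F) 0 1 = 0)
    (h2 : (M : Matrix (Fin 2) (Fin 2) F) 1 0 =
      (M : Matrix (Fin 2) (Fin 2) F) 1 1 - (M : Matrix (Fin 2) (Fin 2) F) 0 0) :
    M ∈ Subgroup.closure ({T, C * B₁, B₃} : Set (GL (Fin 2) F)) := by
  set x := (M : Matrix (Fin 2) (Fin 2) F) 0 0 with hx0
  set y := (M : Matrix (Fin 2) (Fin 2) F) 1 1 with hy0
  have hdet : (M : Matrix (Fin 2) (Fin 2) F).det = x * y := by
    rw [Matrix.det_fin_two, h1]; ring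
  have hxy : x * y ≠ 0 := hdet ▸ det_ne M
  have hx : x ≠ 0 := fun h => hxy (by rw [h, zero_mul])
  have hy : y ≠ 0 := fun h => hxy (by rw [h, mul_zero])
  obtain ⟨a, ha⟩ := exp_exists t ht (Units.mk0 x hx)
  obtain ⟨k, hk⟩ := exp_exists t ht ((Units.mk0 x hx)⁻¹ * Units.mk0 y hy)
  have hxa : (t : F) ^ a = x := by
    have := congrArg (Units.val) ha
    simpa using this
  have hku : x * (t : F) ^ k = y := by
    have := congrArg (Units.val) hk
    simp only [Units.val_mul, Units.val_pow_eq_pow_val] at this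
    rw [this]
    simp [hx]
  have hMeq : M = T ^ a * B₃ ^ k := by
    apply Units.ext
    rw [Units.val_mul, B3_pow t B₃ hB₃]
    have hxa' : ((t ^ a : Fˣ) : F) = x := by simpa using congrArg (Units.val) ha
    have hTa : ((T ^ a : GL (Fin 2) F) : Matrix (Fin 2) (Fin 2) F) = x • 1 := by
      rw [T_eq_sc t T hT, ← map_pow, sc_val, hxa']
    rw [hTa]
    conv_lhs => rw [Matrix.eta_fin_two (M : Matrix (Fin 2) (Fin 2) F)]
    rw [h1, h2, ← hx0, ← hy0]
    ext p q
    fin_cases p <;> fin_cases q <;>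
      simp [Matrix.smul_apply, Matrix.mul_apply, Fin.sum_univ_two, Matrix.one_apply, ← hku] <;>
      try ring
  rw [hMeq]
  exact mul_mem (pow_mem (Subgroup.subset_closure (by simp)) a)
    (pow_mem (Subgroup.subset_closure (by simp)) k)

include ht hT hC hB₁ hB₃ in
lemma mem_G3_iff (M : GL (Fin 2) F) :
    M ∈ Subgroup.closure ({T, C * B₁, B₃} : Set (GL (Fin 2) F)) ↔
      (((M : Matrix (Fin 2) (Fin 2) F) 0 1 = 0 ∧
        (M : Matrix (Fin 2) (Fin 2) F) 1 0 =
          (M : Matrix (Fin 2) (Fin 2) F) 1 1 - (M : Matrix (Fin 2) (Fin 2) F) 0 0) ∨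
      ((M : Matrix (Fin 2) (Fin 2) F) 0 0 = (M : Matrix (Fin 2) (Fin 2) F) 0 1 ∧
        (M : Matrix (Fin 2) (Fin 2) F) 1 1 = -(M : Matrix (Fin 2) (Fin 2) F) 0 1)) := by
  constructor
  · intro hM
    refine Subgroup.closure_le (K := S3) |>.2 ?_ hM
    rintro x (rfl | rfl | rfl)
    · exact Or.inl (by rw [hT]; norm_num)
    · refine Or.inr ?_
      have : ((C * B₁ : GL (Fin 2) F) : Matrix (Fin 2) (Fin 2) F) = !![-1,-1;0,1] := by
        rw [Units.val_mul, hC, hB₁]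
        ext p q
        fin_cases p <;> fin_cases q <;> norm_num [Matrix.mul_apply, Fin.sum_univ_two]
      rw [this]; norm_num
    · exact Or.inl (by rw [hB₃]; norm_num)
  · rintro (⟨h1, h2⟩ | ⟨h1, h2⟩)
    · exact mem_G3_of_type1 t ht T C B₁ B₃ hT hB₃ M h1 h2
    · have hE : ((C * B₁ : GL (Fin 2) F) : Matrix (Fin 2) (Fin 2) F) = !![-1,-1;0,1] := by
        rw [Units.val_mul, hC, hB₁]
        ext p q
        fin_cases p <;> fin_cases q <;> norm_num [Matrix.mul_apply, Fin.sum_univ_two]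
      have hEE : (C * B₁) * (C * B₁) = (1 : GL (Fin 2) F) := by
        apply Units.ext
        rw [Units.val_mul, hE, Units.val_one]
        ext p q
        fin_cases p <;> fin_cases q <;> norm_num [Matrix.mul_apply, Fin.sum_univ_two, Matrix.one_apply]
      have hN : ((C * B₁ * M : GL (Fin 2) F) : Matrix (Fin 2) (Fin 2) F) 0 1 = 0 ∧
          ((C * B₁ * M : GL (Fin 2) F) : Matrix (Fin 2) (Fin 2) F) 1 0 =
            ((C * B₁ * M : GL (Fin 2) F) : Matrix (Fin 2) (Fin 2) F) 1 1 -
              ((C * B₁ * M : GL (Fin 2) F) : Matrix (Fin 2) (Fin 2) F) 0 0 := by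
        rw [Units.val_mul, hE]
        constructor <;>
          · simp only [Matrix.mul_apply, Fin.sum_univ_two, Matrix.cons_val', Matrix.of_apply,
              Matrix.cons_val_zero, Matrix.cons_val_one, Matrix.head_cons, Matrix.head_fin_const,
              Matrix.empty_val', Matrix.cons_val_fin_one]
            simp only [h1, h2]
            ring
      have hmem := mem_G3_of_type1 t ht T C B₁ B₃ hT hB₃ (C * B₁ * M) hN.1 hN.2
      have : M = (C * B₁) * (C * B₁ * M) := by
        rw [← mul_assoc, hEE, one_mul]
      rw [this]
      exact mul_mem (Subgroup.subset_closure (by simp)) hmem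

end G3

namespace Stmt10

variable {F : Type*} [Field F]

lemma sc_inj : Function.Injective (sc : Fˣ → GL (Fin 2) F) := by
  intro a b h
  have := congrFun (congrFun (congrArg (fun M : GL (Fin 2) F => (M : Matrix (Fin 2) (Fin 2) F)) h) 0) 0
  simp only [sc_val] at this
  ext
  simpa using this

/-- Explicit lower-triangular element of `GL(2,F)`. -/
def lt (x y : Fˣ) (z : F) : GL (Fin 2) F :=
  ⟨(!![(x:F), 0; z, (y:F)] : Matrix (Fin 2) (Fin 2) F),
   (!![(x:F)⁻¹, 0; -((x:F)⁻¹ * z * (y:F)⁻¹), (y:F)⁻¹] : Matrix (Fin 2) (Fin 2) F),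
   by
    ext a b
    fin_cases a <;> fin_cases b <;>
      simp [Matrix.mul_apply, Fin.sum_univ_two, Matrix.one_apply] <;>
      field_simp <;> ring,
   by
    ext a b
    fin_cases a <;> fin_cases b <;>
      simp [Matrix.mul_apply, Fin.sum_univ_two, Matrix.one_apply] <;>
      field_simp <;> ring⟩

lemma lt_val (x y : Fˣ) (z : F) :
    ((lt x y z : GL (Fin 2) F) : Matrix (Fin 2) (Fin 2) F) = !![(x:F), 0; z, (y:F)] := rfl

lemma lt_inj {x y x' y' : Fˣ} {z z' : F} (h : (lt x y z : GL (Fin 2) F) = lt x' y' z') :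
    x = x' ∧ y = y' ∧ z = z' := by
  have hv := congrArg (fun M : GL (Fin 2) F => (M : Matrix (Fin 2) (Fin 2) F)) h
  simp only [lt_val] at hv
  have e00 := congrFun (congrFun hv 0) 0
  have e10 := congrFun (congrFun hv 1) 0
  have e11 := congrFun (congrFun hv 1) 1
  simp only [Matrix.cons_val', Matrix.of_apply, Matrix.cons_val_zero, Matrix.cons_val_one,
    Matrix.head_cons, Matrix.head_fin_const, Matrix.empty_val', Matrix.cons_val_fin_one] at e00 e10 e11
  exact ⟨Units.ext e00, Units.ext e11, e10⟩

def jj2 : Bool → Fin 6 := fun s => bif s then 3 else 0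
def jj3 : Bool → Fin 6 := fun s => bif s then 4 else 0
def jj4 : Bool → Fin 6 := fun s => bif s then 5 else 0

lemma idx_lower {a : F} (ha : a ≠ 0) (i : Fin 6)
    (h : a * (L i : Matrix (Fin 2) (Fin 2) F) 0 1 = 0) : i = 0 ∨ i = 3 := by
  fin_cases i <;>
    first
      | exact Or.inl rfl
      | exact Or.inr rfl
      | exact absurd (by simpa [L] using h) ha

lemma idx_G3 {a : F} (ha : a ≠ 0) (i : Fin 6)
    (h : (a * (L i : Matrix (Fin 2) (Fin 2) F) 0 1 = 0 ∧
        a * (L i : Matrix (Fin 2) (Fin 2) F) 1 0 =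
          a * L i 1 1 - a * L i 0 0) ∨
      (a * (L i : Matrix (Fin 2) (Fin 2) F) 0 0 = a * L i 0 1 ∧
        a * (L i : Matrix (Fin 2) (Fin 2) F) 1 1 = -(a * L i 0 1))) : i = 0 ∨ i = 4 := by
  fin_cases i <;>
    first
      | exact Or.inl rfl
      | exact Or.inr rfl
      | (rcases h with ⟨p1, p2⟩ | ⟨p1, p2⟩ <;>
          simp only [L, v6_0, v6_1, v6_2, v6_3, v6_4, v6_5, v6_0', v6_1', v6_2', v6_3', v6_4',
            v6_5', Matrix.cons_val', Matrix.of_apply,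
            Matrix.cons_val_zero, Matrix.cons_val_one, Matrix.head_cons, Matrix.head_fin_const,
            Matrix.empty_val', Matrix.cons_val_fin_one, mul_one, mul_zero, mul_neg] at p1 p2 <;>
          first
            | exact absurd p1 ha
            | exact absurd p2 ha
            | exact absurd (show a = 0 by first
                | linear_combination p1 | linear_combination -p1
                | linear_combination p2 | linear_combination -p2
                | linear_combination p1 - p2 | linear_combination p2 - p1
                | linear_combination p1 + p2 | linear_combination -p1 - p2) ha)

lemma idx_G4 {a : F} (ha : a ≠ 0) (i : Fin 6)
    (h : (a * (L i : Matrix (Fin 2) (Fin 2) F) 0 1 = 0 ∧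
        a * (L i : Matrix (Fin 2) (Fin 2) F) 1 0 = 0) ∨
      (a * (L i : Matrix (Fin 2) (Fin 2) F) 0 0 = 0 ∧
        a * (L i : Matrix (Fin 2) (Fin 2) F) 1 1 = 0)) : i = 0 ∨ i = 5 := by
  fin_cases i <;>
    first
      | exact Or.inl rfl
      | exact Or.inr rfl
      | (rcases h with ⟨p1, p2⟩ | ⟨p1, p2⟩ <;>
          simp only [L, v6_0, v6_1, v6_2, v6_3, v6_4, v6_5, v6_0', v6_1', v6_2', v6_3', v6_4',
            v6_5', Matrix.cons_val', Matrix.of_apply,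
            Matrix.cons_val_zero, Matrix.cons_val_one, Matrix.head_cons, Matrix.head_fin_const,
            Matrix.empty_val', Matrix.cons_val_fin_one, mul_one, mul_zero, mul_neg] at p1 p2 <;>
          first
            | exact absurd p1 ha
            | exact absurd p2 ha
            | exact absurd (show a = 0 by first
                | linear_combination p1 | linear_combination -p1
                | linear_combination p2 | linear_combination -p2
                | linear_combination p1 - p2 | linear_combination p2 - p1
                | linear_combination p1 + p2 | linear_combination -p1 - p2) ha)

lemma card_sub {G : Type*} [Group G] (H : Subgroup G) {P : Type*} (f : P → G)
    (hinj : Function.Injective f) (h : ∀ M, M ∈ H ↔ ∃ p, f p = M) :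
    Nat.card H = Nat.card P := by
  have hset : (H : Set G) = Set.range f := by
    ext M
    simp only [SetLike.mem_coe, Set.mem_range]
    exact h M
  calc Nat.card H = Nat.card (H : Set G) := rfl
    _ = Nat.card (Set.range f) := by rw [hset]
    _ = Nat.card P := Nat.card_range_of_injective hinj

end Stmt10

open Stmt10 in
set_option maxHeartbeats 2000000 in
theorem stmt10 (F : Type*) [Field F] [Fintype F]
    (hq : 5 ≤ Fintype.card F)
    (t : Fˣ) (ht : ∀ x : Fˣ, x ∈ Subgroup.zpowers t)
    (T B₁ B₃ C : GL (Fin 2) F)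
    (hT : (T : Matrix (Fin 2) (Fin 2) F) = !![(t : F), 0; 0, (t : F)])
    (hB₁ : (B₁ : Matrix (Fin 2) (Fin 2) F) = !![1, 0; -1, -1])
    (hB₃ : (B₃ : Matrix (Fin 2) (Fin 2) F) = !![1, 0; (t : F) - 1, (t : F)])
    (hC : (C : Matrix (Fin 2) (Fin 2) F) = !![0, 1; -1, -1])
    (G₁ G₂ G₃ G₄ : Subgroup (GL (Fin 2) F))
    (h₁ : G₁ = Subgroup.closure {T, C, B₁})
    (h₂ : (G₂ : Set (GL (Fin 2) F)) =
        {M : GL (Fin 2) F | (M : Matrix (Fin 2) (Fin 2) F) 0 1 = 0})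
    (h₃ : G₃ = Subgroup.closure {T, C * B₁, B₃})
    (h₄ : (G₄ : Set (GL (Fin 2) F)) =
        {M : GL (Fin 2) F |
          ((M : Matrix (Fin 2) (Fin 2) F) 0 1 = 0 ∧ (M : Matrix (Fin 2) (Fin 2) F) 1 0 = 0) ∨
          ((M : Matrix (Fin 2) (Fin 2) F) 0 0 = 0 ∧ (M : Matrix (Fin 2) (Fin 2) F) 1 1 = 0)}) :
    Nat.card G₁ * Nat.card G₂ * Nat.card (G₃ ⊓ G₄ : Subgroup _) *
        Nat.card (G₁ ⊓ G₂ ⊓ G₃ : Subgroup _) * Nat.card (G₁ ⊓ G₂ ⊓ G₄ : Subgroup _) =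
      6 * Fintype.card F * (Fintype.card F - 1) ^ 6 ∧
    Nat.card (G₁ ⊓ G₂ : Subgroup _) * Nat.card (G₁ ⊓ G₃ : Subgroup _) *
        Nat.card (G₁ ⊓ G₄ : Subgroup _) * Nat.card (G₂ ⊓ G₃ : Subgroup _) *
        Nat.card (G₂ ⊓ G₄ : Subgroup _) = 8 * (Fintype.card F - 1) ^ 7 ∧
    ¬(Nat.card G₁ * Nat.card G₂ * Nat.card (G₃ ⊓ G₄ : Subgroup _) *
          Nat.card (G₁ ⊓ G₂ ⊓ G₃ : Subgroup _) * Nat.card (G₁ ⊓ G₂ ⊓ G₄ : Subgroup _) ≥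
        Nat.card (G₁ ⊓ G₂ : Subgroup _) * Nat.card (G₁ ⊓ G₃ : Subgroup _) *
          Nat.card (G₁ ⊓ G₄ : Subgroup _) * Nat.card (G₂ ⊓ G₃ : Subgroup _) *
          Nat.card (G₂ ⊓ G₄ : Subgroup _)) := by
  classical
  -- membership characterizations
  have hG1 : ∀ M : GL (Fin 2) F, M ∈ G₁ ↔
      ∃ a : Fˣ, ∃ i : Fin 6, (M : Matrix (Fin 2) (Fin 2) F) = (a:F) • L i := by
    intro M; rw [h₁]; exact mem_G1_iff t ht T C B₁ hT hC hB₁ M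
  have hG3 : ∀ M : GL (Fin 2) F, M ∈ G₃ ↔
      (((M : Matrix (Fin 2) (Fin 2) F) 0 1 = 0 ∧
        (M : Matrix (Fin 2) (Fin 2) F) 1 0 =
          (M : Matrix (Fin 2) (Fin 2) F) 1 1 - (M : Matrix (Fin 2) (Fin 2) F) 0 0) ∨
      ((M : Matrix (Fin 2) (Fin 2) F) 0 0 = (M : Matrix (Fin 2) (Fin 2) F) 0 1 ∧
        (M : Matrix (Fin 2) (Fin 2) F) 1 1 = -(M : Matrix (Fin 2) (Fin 2) F) 0 1)) := by
    intro M; rw [h₃]; exact mem_G3_iff t ht T C B₁ B₃ hT hC hB₁ hB₃ M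
  have hG2 : ∀ M : GL (Fin 2) F, M ∈ G₂ ↔ (M : Matrix (Fin 2) (Fin 2) F) 0 1 = 0 := by
    intro M; rw [← SetLike.mem_coe, h₂]; exact Iff.rfl
  have hG4 : ∀ M : GL (Fin 2) F, M ∈ G₄ ↔
      (((M : Matrix (Fin 2) (Fin 2) F) 0 1 = 0 ∧ (M : Matrix (Fin 2) (Fin 2) F) 1 0 = 0) ∨
        ((M : Matrix (Fin 2) (Fin 2) F) 0 0 = 0 ∧ (M : Matrix (Fin 2) (Fin 2) F) 1 1 = 0)) := by
    intro M; rw [← SetLike.mem_coe, h₄]; exact Iff.rfl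
  have aux : ∀ (a : Fˣ) (i : Fin 6),
      ((sc a * gg C B₁ i : GL (Fin 2) F) : Matrix (Fin 2) (Fin 2) F) = (a:F) • L i := by
    intro a i
    rw [Units.val_mul, sc_val, gg_val C B₁ hC hB₁, smul_mul_assoc, one_mul]
  have scmem1 : ∀ a : Fˣ, sc a ∈ G₁ := fun a => (hG1 _).2 ⟨a, 0, by rw [sc_val, L_zero]⟩
  have scmem2 : ∀ a : Fˣ, sc a ∈ G₂ := fun a => (hG2 _).2 (by rw [sc_val]; simp)
  have scmem3 : ∀ a : Fˣ, sc a ∈ G₃ := fun a => (hG3 _).2 (Or.inl (by rw [sc_val]; simp))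
  have scmem4 : ∀ a : Fˣ, sc a ∈ G₄ := fun a => (hG4 _).2 (Or.inl (by rw [sc_val]; simp))
  -- injectivity of the parametrizations
  have injgg : ∀ (j : Bool → Fin 6), Function.Injective j →
      Function.Injective (fun p : Fˣ × Bool => sc p.1 * gg C B₁ (j p.2)) := by
    intro j hj
    rintro ⟨a, s⟩ ⟨b, s'⟩ h
    have hv : (a:F) • (L (j s) : Matrix (Fin 2) (Fin 2) F) = (b:F) • L (j s') := by
      have := congrArg (fun M : GL (Fin 2) F => (M : Matrix (Fin 2) (Fin 2) F)) h
      simpa [aux] using this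
    obtain ⟨hab, hij⟩ := L_smul_inj (Units.ne_zero a) hv
    have : s = s' := hj hij
    subst this
    have : a = b := Units.ext hab
    subst this
    rfl
  have injf1 : Function.Injective (fun p : Fˣ × Fin 6 => sc p.1 * gg C B₁ p.2) := by
    rintro ⟨a, i⟩ ⟨b, j⟩ h
    have hv : (a:F) • (L i : Matrix (Fin 2) (Fin 2) F) = (b:F) • L j := by
      have := congrArg (fun M : GL (Fin 2) F => (M : Matrix (Fin 2) (Fin 2) F)) h
      simpa [aux] using this
    obtain ⟨hab, hij⟩ := L_smul_inj (Units.ne_zero a) hv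
    subst hij
    have : a = b := Units.ext hab
    subst this
    rfl
  have injsc : Function.Injective (fun a : Fˣ => (sc a : GL (Fin 2) F)) := sc_inj
  have injlt3 : Function.Injective (fun p : Fˣ × Fˣ => (lt p.1 p.2 ((p.2:F) - (p.1:F)) : GL (Fin 2) F)) := by
    rintro ⟨x, y⟩ ⟨x', y'⟩ h
    obtain ⟨h1, h2, _⟩ := lt_inj h
    exact Prod.ext h1 h2
  have injlt4 : Function.Injective (fun p : Fˣ × Fˣ => (lt p.1 p.2 0 : GL (Fin 2) F)) := by
    rintro ⟨x, y⟩ ⟨x', y'⟩ h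
    obtain ⟨h1, h2, _⟩ := lt_inj h
    exact Prod.ext h1 h2
  have injlt2 : Function.Injective (fun p : Fˣ × Fˣ × F => (lt p.1 p.2.1 p.2.2 : GL (Fin 2) F)) := by
    rintro ⟨x, y, z⟩ ⟨x', y', z'⟩ h
    obtain ⟨h1, h2, h3⟩ := lt_inj h
    exact Prod.ext h1 (Prod.ext h2 h3)
  -- membership via parametrizations
  have hmem1 : ∀ M : GL (Fin 2) F, M ∈ G₁ ↔
      ∃ p : Fˣ × Fin 6, sc p.1 * gg C B₁ p.2 = M := by
    intro M
    rw [hG1 M]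
    constructor
    · rintro ⟨a, i, hM⟩
      exact ⟨(a, i), Units.ext (by rw [aux]; exact hM.symm)⟩
    · rintro ⟨⟨a, i⟩, rfl⟩
      exact ⟨a, i, aux a i⟩
  have hmem2 : ∀ M : GL (Fin 2) F, M ∈ G₂ ↔
      ∃ p : Fˣ × Fˣ × F, lt p.1 p.2.1 p.2.2 = M := by
    intro M
    constructor
    · intro hM
      have h01 := (hG2 M).1 hM
      have hdet : (M : Matrix (Fin 2) (Fin 2) F).det =
          (M : Matrix (Fin 2) (Fin 2) F) 0 0 * (M : Matrix (Fin 2) (Fin 2) F) 1 1 := by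
        rw [Matrix.det_fin_two, h01]; ring
      have hxy := hdet ▸ det_ne M
      have hx : (M : Matrix (Fin 2) (Fin 2) F) 0 0 ≠ 0 := fun h => hxy (by rw [h, zero_mul])
      have hy : (M : Matrix (Fin 2) (Fin 2) F) 1 1 ≠ 0 := fun h => hxy (by rw [h, mul_zero])
      refine ⟨(Units.mk0 _ hx, Units.mk0 _ hy, (M : Matrix (Fin 2) (Fin 2) F) 1 0), ?_⟩
      apply Units.ext
      rw [lt_val]
      conv_rhs => rw [Matrix.eta_fin_two (M : Matrix (Fin 2) (Fin 2) F)]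
      rw [h01]
      rfl
    · rintro ⟨⟨x, y, z⟩, rfl⟩
      exact (hG2 _).2 (by rw [lt_val]; simp)
  have hmem24 : ∀ M : GL (Fin 2) F, M ∈ G₂ ⊓ G₄ ↔
      ∃ p : Fˣ × Fˣ, lt p.1 p.2 0 = M := by
    intro M
    rw [Subgroup.mem_inf]
    constructor
    · rintro ⟨hM2, hM4⟩
      have h01 := (hG2 M).1 hM2
      rcases (hG4 M).1 hM4 with ⟨_, d2⟩ | ⟨a1, a2⟩
      · have hdet : (M : Matrix (Fin 2) (Fin 2) F).det =
            (M : Matrix (Fin 2) (Fin 2) F) 0 0 * (M : Matrix (Fin 2) (Fin 2) F) 1 1 := by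
          rw [Matrix.det_fin_two, h01]; ring
        have hxy := hdet ▸ det_ne M
        have hx : (M : Matrix (Fin 2) (Fin 2) F) 0 0 ≠ 0 := fun h => hxy (by rw [h, zero_mul])
        have hy : (M : Matrix (Fin 2) (Fin 2) F) 1 1 ≠ 0 := fun h => hxy (by rw [h, mul_zero])
        refine ⟨(Units.mk0 _ hx, Units.mk0 _ hy), ?_⟩
        apply Units.ext
        rw [lt_val]
        conv_rhs => rw [Matrix.eta_fin_two (M : Matrix (Fin 2) (Fin 2) F)]
        rw [h01, d2]
        rfl
      · exact absurd (by rw [Matrix.det_fin_two, a1, h01]; ring) (det_ne M)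
    · rintro ⟨⟨x, y⟩, rfl⟩
      exact ⟨(hG2 _).2 (by rw [lt_val]; simp),
        (hG4 _).2 (Or.inl ⟨by rw [lt_val]; simp, by rw [lt_val]; simp⟩)⟩
  have hmem23 : ∀ M : GL (Fin 2) F, M ∈ G₂ ⊓ G₃ ↔
      ∃ p : Fˣ × Fˣ, lt p.1 p.2 ((p.2:F) - (p.1:F)) = M := by
    intro M
    rw [Subgroup.mem_inf]
    constructor
    · rintro ⟨hM2, hM3⟩
      have h01 := (hG2 M).1 hM2
      rcases (hG3 M).1 hM3 with ⟨_, g2⟩ | ⟨g1, _⟩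
      · have hdet : (M : Matrix (Fin 2) (Fin 2) F).det =
            (M : Matrix (Fin 2) (Fin 2) F) 0 0 * (M : Matrix (Fin 2) (Fin 2) F) 1 1 := by
          rw [Matrix.det_fin_two, h01]; ring
        have hxy := hdet ▸ det_ne M
        have hx : (M : Matrix (Fin 2) (Fin 2) F) 0 0 ≠ 0 := fun h => hxy (by rw [h, zero_mul])
        have hy : (M : Matrix (Fin 2) (Fin 2) F) 1 1 ≠ 0 := fun h => hxy (by rw [h, mul_zero])
        refine ⟨(Units.mk0 _ hx, Units.mk0 _ hy), ?_⟩
        apply Units.ext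
        rw [lt_val]
        conv_rhs => rw [Matrix.eta_fin_two (M : Matrix (Fin 2) (Fin 2) F)]
        rw [h01, g2]
        rfl
      · exact absurd (by rw [Matrix.det_fin_two, h01, g1.trans h01]; ring) (det_ne M)
    · rintro ⟨⟨x, y⟩, rfl⟩
      refine ⟨(hG2 _).2 (by rw [lt_val]; simp), (hG3 _).2 (Or.inl ⟨?_, ?_⟩)⟩
      · rw [lt_val]; simp
      · rw [lt_val]; simp
  have hmem34 : ∀ M : GL (Fin 2) F, M ∈ G₃ ⊓ G₄ ↔ ∃ a : Fˣ, sc a = M := by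
    intro M
    rw [Subgroup.mem_inf]
    constructor
    · rintro ⟨hM3, hM4⟩
      rcases (hG3 M).1 hM3 with ⟨g1, g2⟩ | ⟨g1, g2⟩
      · rcases (hG4 M).1 hM4 with ⟨d1, d2⟩ | ⟨a1, a2⟩
        · have h11 : (M : Matrix (Fin 2) (Fin 2) F) 1 1 = (M : Matrix (Fin 2) (Fin 2) F) 0 0 := by
            linear_combination d2 - g2
          have hdet : (M : Matrix (Fin 2) (Fin 2) F).det =
              (M : Matrix (Fin 2) (Fin 2) F) 0 0 * (M : Matrix (Fin 2) (Fin 2) F) 1 1 := by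
            rw [Matrix.det_fin_two, g1]; ring
          have hxy := hdet ▸ det_ne M
          have hx : (M : Matrix (Fin 2) (Fin 2) F) 0 0 ≠ 0 := fun h => hxy (by rw [h, zero_mul])
          refine ⟨Units.mk0 _ hx, ?_⟩
          apply Units.ext
          rw [sc_val]
          conv_rhs => rw [Matrix.eta_fin_two (M : Matrix (Fin 2) (Fin 2) F)]
          rw [g1, d2, h11]
          ext p q
          fin_cases p <;> fin_cases q <;> simp [Matrix.one_apply]
        · exact absurd (by rw [Matrix.det_fin_two, a1, g1]; ring) (det_ne M)
      · rcases (hG4 M).1 hM4 with ⟨d1, _⟩ | ⟨a1, _⟩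
        · exact absurd (by rw [Matrix.det_fin_two, g1, d1]; ring) (det_ne M)
        · exact absurd (by rw [Matrix.det_fin_two, a1, ← g1, a1]; ring) (det_ne M)
    · rintro ⟨a, rfl⟩
      exact ⟨scmem3 a, scmem4 a⟩
  have hmem12 : ∀ M : GL (Fin 2) F, M ∈ G₁ ⊓ G₂ ↔
      ∃ p : Fˣ × Bool, sc p.1 * gg C B₁ (jj2 p.2) = M := by
    intro M
    rw [Subgroup.mem_inf]
    constructor
    · rintro ⟨hM1, hM2⟩
      obtain ⟨a, i, hM⟩ := (hG1 M).1 hM1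
      have h01 : (a:F) * (L i : Matrix (Fin 2) (Fin 2) F) 0 1 = 0 := by
        have := (hG2 M).1 hM2
        rw [hM] at this
        simpa [Matrix.smul_apply] using this
      rcases idx_lower (Units.ne_zero a) i h01 with rfl | rfl
      · exact ⟨(a, false), Units.ext (by rw [aux]; exact hM.symm)⟩
      · exact ⟨(a, true), Units.ext (by rw [aux]; exact hM.symm)⟩
    · rintro ⟨⟨a, s⟩, rfl⟩
      refine ⟨(hG1 _).2 ⟨a, jj2 s, aux a _⟩, (hG2 _).2 ?_⟩
      rw [aux]
      cases s <;> simp [jj2, L, Matrix.smul_apply]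
  have hmem13 : ∀ M : GL (Fin 2) F, M ∈ G₁ ⊓ G₃ ↔
      ∃ p : Fˣ × Bool, sc p.1 * gg C B₁ (jj3 p.2) = M := by
    intro M
    rw [Subgroup.mem_inf]
    constructor
    · rintro ⟨hM1, hM3⟩
      obtain ⟨a, i, hM⟩ := (hG1 M).1 hM1
      have hg3 := (hG3 M).1 hM3
      rw [hM] at hg3
      simp only [Matrix.smul_apply, smul_eq_mul] at hg3
      rcases idx_G3 (Units.ne_zero a) i hg3 with rfl | rfl
      · exact ⟨(a, false), Units.ext (by rw [aux]; exact hM.symm)⟩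
      · exact ⟨(a, true), Units.ext (by rw [aux]; exact hM.symm)⟩
    · rintro ⟨⟨a, s⟩, rfl⟩
      refine ⟨(hG1 _).2 ⟨a, jj3 s, aux a _⟩, (hG3 _).2 ?_⟩
      cases s
      · refine Or.inl ⟨?_, ?_⟩ <;> · rw [aux]; simp [jj3, L, Matrix.smul_apply]
      · refine Or.inr ⟨?_, ?_⟩ <;> · rw [aux]; simp [jj3, L, Matrix.smul_apply]
  have hmem14 : ∀ M : GL (Fin 2) F, M ∈ G₁ ⊓ G₄ ↔
      ∃ p : Fˣ × Bool, sc p.1 * gg C B₁ (jj4 p.2) = M := by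
    intro M
    rw [Subgroup.mem_inf]
    constructor
    · rintro ⟨hM1, hM4⟩
      obtain ⟨a, i, hM⟩ := (hG1 M).1 hM1
      have hg4 := (hG4 M).1 hM4
      rw [hM] at hg4
      simp only [Matrix.smul_apply, smul_eq_mul] at hg4
      rcases idx_G4 (Units.ne_zero a) i hg4 with rfl | rfl
      · exact ⟨(a, false), Units.ext (by rw [aux]; exact hM.symm)⟩
      · exact ⟨(a, true), Units.ext (by rw [aux]; exact hM.symm)⟩
    · rintro ⟨⟨a, s⟩, rfl⟩
      refine ⟨(hG1 _).2 ⟨a, jj4 s, aux a _⟩, (hG4 _).2 ?_⟩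
      cases s
      · refine Or.inl ⟨?_, ?_⟩ <;> · rw [aux]; simp [jj4, L, Matrix.smul_apply]
      · refine Or.inr ⟨?_, ?_⟩ <;> · rw [aux]; simp [jj4, L, Matrix.smul_apply]
  have hmem123 : ∀ M : GL (Fin 2) F, M ∈ G₁ ⊓ G₂ ⊓ G₃ ↔ ∃ a : Fˣ, sc a = M := by
    intro M
    rw [Subgroup.mem_inf, Subgroup.mem_inf]
    constructor
    · rintro ⟨⟨hM1, hM2⟩, hM3⟩
      obtain ⟨a, i, hM⟩ := (hG1 M).1 hM1
      have h01 : (a:F) * (L i : Matrix (Fin 2) (Fin 2) F) 0 1 = 0 := by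
        have := (hG2 M).1 hM2
        rw [hM] at this
        simpa [Matrix.smul_apply] using this
      have hg3 := (hG3 M).1 hM3
      rw [hM] at hg3
      simp only [Matrix.smul_apply, smul_eq_mul] at hg3
      have hi : i = 0 := by
        rcases idx_lower (Units.ne_zero a) i h01 with rfl | rfl
        · rfl
        · rcases idx_G3 (Units.ne_zero a) _ hg3 with h | h <;> exact absurd h (by decide)
      subst hi
      refine ⟨a, ?_⟩
      apply Units.ext
      rw [sc_val, hM, L_zero]
    · rintro ⟨a, rfl⟩
      exact ⟨⟨scmem1 a, scmem2 a⟩, scmem3 a⟩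
  have hmem124 : ∀ M : GL (Fin 2) F, M ∈ G₁ ⊓ G₂ ⊓ G₄ ↔ ∃ a : Fˣ, sc a = M := by
    intro M
    rw [Subgroup.mem_inf, Subgroup.mem_inf]
    constructor
    · rintro ⟨⟨hM1, hM2⟩, hM4⟩
      obtain ⟨a, i, hM⟩ := (hG1 M).1 hM1
      have h01 : (a:F) * (L i : Matrix (Fin 2) (Fin 2) F) 0 1 = 0 := by
        have := (hG2 M).1 hM2
        rw [hM] at this
        simpa [Matrix.smul_apply] using this
      have hg4 := (hG4 M).1 hM4
      rw [hM] at hg4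
      simp only [Matrix.smul_apply, smul_eq_mul] at hg4
      have hi : i = 0 := by
        rcases idx_lower (Units.ne_zero a) i h01 with rfl | rfl
        · rfl
        · rcases idx_G4 (Units.ne_zero a) _ hg4 with h | h <;> exact absurd h (by decide)
      subst hi
      refine ⟨a, ?_⟩
      apply Units.ext
      rw [sc_val, hM, L_zero]
    · rintro ⟨a, rfl⟩
      exact ⟨⟨scmem1 a, scmem2 a⟩, scmem4 a⟩
  -- cardinalities
  have hn : Nat.card Fˣ = Fintype.card F - 1 := by
    rw [Nat.card_eq_fintype_card, Fintype.card_units]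
  set m : ℕ := Fintype.card F - 1 with hm
  have hFm : Fintype.card F = m + 1 := by omega
  have c1 : Nat.card G₁ = m * 6 := by
    rw [card_sub G₁ _ injf1 hmem1, Nat.card_prod, hn, Nat.card_eq_fintype_card, Fintype.card_fin]
  have c2 : Nat.card G₂ = m * (m * (m + 1)) := by
    rw [card_sub G₂ _ injlt2 hmem2, Nat.card_prod, Nat.card_prod, hn,
      Nat.card_eq_fintype_card (α := F), hFm]
  have c34 : Nat.card (G₃ ⊓ G₄ : Subgroup _) = m := by
    rw [card_sub _ _ injsc hmem34, hn]
  have c123 : Nat.card (G₁ ⊓ G₂ ⊓ G₃ : Subgroup _) = m := by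
    rw [card_sub _ _ injsc hmem123, hn]
  have c124 : Nat.card (G₁ ⊓ G₂ ⊓ G₄ : Subgroup _) = m := by
    rw [card_sub _ _ injsc hmem124, hn]
  have c12 : Nat.card (G₁ ⊓ G₂ : Subgroup _) = m * 2 := by
    rw [card_sub _ _ (injgg jj2 (by decide)) hmem12, Nat.card_prod, hn,
      Nat.card_eq_fintype_card, Fintype.card_bool]
  have c13 : Nat.card (G₁ ⊓ G₃ : Subgroup _) = m * 2 := by
    rw [card_sub _ _ (injgg jj3 (by decide)) hmem13, Nat.card_prod, hn,
      Nat.card_eq_fintype_card, Fintype.card_bool]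
  have c14 : Nat.card (G₁ ⊓ G₄ : Subgroup _) = m * 2 := by
    rw [card_sub _ _ (injgg jj4 (by decide)) hmem14, Nat.card_prod, hn,
      Nat.card_eq_fintype_card, Fintype.card_bool]
  have c23 : Nat.card (G₂ ⊓ G₃ : Subgroup _) = m * m := by
    rw [card_sub _ _ injlt3 hmem23, Nat.card_prod, hn]
  have c24 : Nat.card (G₂ ⊓ G₄ : Subgroup _) = m * m := by
    rw [card_sub _ _ injlt4 hmem24, Nat.card_prod, hn]
  rw [c1, c2, c34, c123, c124, c12, c13, c14, c23, c24, hFm]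
  have hm4 : 4 ≤ m := by omega
  refine ⟨by ring, by ring, ?_⟩
  intro hge
  have hlt : (m * 6) * (m * (m * (m + 1))) * m * m * m < m * 2 * (m * 2) * (m * 2) * (m * m) * (m * m) := by
    have h1 : 6 * (m + 1) < 8 * m := by omega
    calc (m * 6) * (m * (m * (m + 1))) * m * m * m = (6 * (m + 1)) * m ^ 6 := by ring
      _ < (8 * m) * m ^ 6 := by
          have h2 : 0 < m ^ 6 := by positivity
          exact mul_lt_mul_of_pos_right h1 h2
      _ = m * 2 * (m * 2) * (m * 2) * (m * m) * (m * m) := by ring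
  omega
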